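/- (Logarithmic derivative of the Selberg zeta function as a sum over closed geodesics.) Let k ∈ ℤ and s ∈ ℂ with Re(s) > 2. Then the family over (i, m) ∈ I × {m ∈ ℕ : m ≥ 1} given by ℓ i · exp(i·(k/2)·m·θ i) · exp(−s·m·ℓ i) / ( (1 − exp(−m(ℓ i + i·θ i)))·(1 − exp(−m(ℓ i − i·θ i))) ) is summable, and the function w ↦ Z(k, w) has, at the point s, a complex derivative equal to Z(k, s) · ∑_{i ∈ I} ∑_{m ≥ 1} ℓ i · exp(i·(k/2)·m·θ i) · exp(−s·m·ℓ i) / ( (1 − exp(−m(ℓ i + i·θ i)))·(1 − exp(−m(ℓ i − i·θ i))) ); equivalently, d/ds log Z(k, s) equals this double sum. -/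

import Mathlib

/-- `R(σ_k, s) = ∏_{i ∈ I} (1 − e^{i(k/2)θ_i} e^{−s ℓ_i})`. -/
noncomputable def Rz {I : Type*} (ℓ θ : I → ℝ) (k : ℤ) (s : ℂ) : ℂ :=
  ∏' i : I, (1 - Complex.exp (Complex.I * ((k : ℂ) / 2) * (θ i : ℂ))
    * Complex.exp (-s * (ℓ i : ℂ)))

/-- Selberg zeta function
`Z(σ_k, s) = ∏_{i ∈ I} ∏_{p,q ≥ 0} (1 − e^{i(k/2)θ_i} e^{−p(ℓ_i+iθ_i)} e^{−q(ℓ_i−iθ_i)} e^{−s ℓ_i})`. -/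
noncomputable def Zs {I : Type*} (ℓ θ : I → ℝ) (k : ℤ) (s : ℂ) : ℂ :=
  ∏' x : I × ℕ × ℕ,
    (1 - Complex.exp (Complex.I * ((k : ℂ) / 2) * (θ x.1 : ℂ))
       * Complex.exp (-(x.2.1 : ℂ) * ((ℓ x.1 : ℂ) + Complex.I * (θ x.1 : ℂ)))
       * Complex.exp (-(x.2.2 : ℂ) * ((ℓ x.1 : ℂ) - Complex.I * (θ x.1 : ℂ)))
       * Complex.exp (-s * (ℓ x.1 : ℂ)))

open Complex Filter



lemma s16_sum_fin_compare {α : Type*} {T : Set α} (hT : T.Finite) {f g : α → ℝ}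
    (hf : ∀ a, 0 ≤ f a) (hg : Summable g) (h : ∀ a ∉ T, f a ≤ g a) : Summable f :=
  hT.summable_compl_iff.mp <| Summable.of_nonneg_of_le (fun a => hf a)
    (fun a => h a a.2) (hg.subtype _)

set_option maxHeartbeats 1000000 in
/-- Master summability over `I × ℕ × ℕ`. -/
lemma s16_sumX {I : Type*} (ℓ : I → ℝ) (hℓ : ∀ i, 0 < ℓ i) (δ : ℝ) (hδ : δ < 2)
    (hsum : Summable fun i => Real.exp (-δ * ℓ i)) (g : I → ℝ) (hg0 : ∀ i, 0 ≤ g i)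
    (hgle : ∀ i, 1 ≤ ℓ i → g i ≤ 4 * (ℓ i * Real.exp (-2 * ℓ i))) :
    Summable (fun x : I × ℕ × ℕ =>
      g x.1 * Real.exp (-ℓ x.1) ^ x.2.1 * Real.exp (-ℓ x.1) ^ x.2.2) := by
  set δ' : ℝ := max δ 1 with hδ'def
  have hδ'1 : (1:ℝ) ≤ δ' := le_max_right _ _
  have hδ'2 : δ' < 2 := max_lt hδ one_lt_two
  have hsum' : Summable fun i => Real.exp (-δ' * ℓ i) := by
    refine hsum.of_nonneg_of_le (fun i => (Real.exp_pos _).le) (fun i => ?_)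
    apply Real.exp_le_exp.mpr
    have := (hℓ i).le
    nlinarith [le_max_left δ 1]
  have hT : {i : I | ℓ i < 1}.Finite := by
    have h1 : ∀ᶠ i in cofinite, Real.exp (-δ' * ℓ i) < Real.exp (-δ') :=
      hsum'.tendsto_cofinite_zero.eventually_lt_const (Real.exp_pos _)
    refine (Filter.eventually_cofinite.mp h1).subset (fun i hi => ?_)
    simp only [Set.mem_setOf_eq, not_lt] at *
    apply Real.exp_le_exp.mpr
    nlinarith [hℓ i, hδ'1]
  have hr0 : ∀ i, 0 ≤ Real.exp (-ℓ i) := fun i => (Real.exp_pos _).le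
  have hr1 : ∀ i, Real.exp (-ℓ i) < 1 := fun i => Real.exp_lt_one_iff.mpr (by linarith [hℓ i])
  have hfibsum : ∀ i : I, Summable (fun pq : ℕ × ℕ =>
      g i * Real.exp (-ℓ i) ^ pq.1 * Real.exp (-ℓ i) ^ pq.2) := fun i =>
    Summable.mul_of_nonneg
      ((summable_geometric_of_lt_one (hr0 i) (hr1 i)).mul_left (g i))
      (summable_geometric_of_lt_one (hr0 i) (hr1 i))
      (fun p => mul_nonneg (hg0 i) (pow_nonneg (hr0 i) p))
      (fun q => pow_nonneg (hr0 i) q)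
  refine (summable_prod_of_nonneg ?_).mpr ⟨fun i => hfibsum i, ?_⟩
  · intro x
    exact mul_nonneg (mul_nonneg (hg0 _) (pow_nonneg (hr0 _) _)) (pow_nonneg (hr0 _) _)
  -- outer summability
  have hfib : ∀ i : I, ∑' pq : ℕ × ℕ, g i * Real.exp (-ℓ i) ^ pq.1 * Real.exp (-ℓ i) ^ pq.2
      = g i * ((1 - Real.exp (-ℓ i))⁻¹ * (1 - Real.exp (-ℓ i))⁻¹) := by
    intro i
    rw [Summable.tsum_prod' (hfibsum i) (hfibsum i).prod_factor]
    calc ∑' (p : ℕ) (q : ℕ), g i * Real.exp (-ℓ i) ^ p * Real.exp (-ℓ i) ^ q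
        = ∑' (p : ℕ), g i * Real.exp (-ℓ i) ^ p * (1 - Real.exp (-ℓ i))⁻¹ := by
          congr 1; ext p
          rw [tsum_mul_left, tsum_geometric_of_lt_one (hr0 i) (hr1 i)]
      _ = g i * ((1 - Real.exp (-ℓ i))⁻¹ * (1 - Real.exp (-ℓ i))⁻¹) := by
          rw [tsum_mul_right, tsum_mul_left, tsum_geometric_of_lt_one (hr0 i) (hr1 i)]
          ring
  refine s16_sum_fin_compare hT (fun i => tsum_nonneg (fun pq => mul_nonneg (mul_nonneg (hg0 _) (pow_nonneg (hr0 _) _)) (pow_nonneg (hr0 _) _)))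
    (g := fun i => 16 * ((2 - δ')⁻¹ * Real.exp (-δ' * ℓ i)))
    ((hsum'.mul_left ((2 - δ')⁻¹)).mul_left 16) (fun i hi => ?_)
  simp only [Set.mem_setOf_eq, not_lt] at hi
  rw [hfib i]
  have hinv : (1 - Real.exp (-ℓ i))⁻¹ ≤ 2 := by
    rw [inv_le_comm₀ (by nlinarith [hr1 i, hr0 i, Real.exp_le_exp.mpr (neg_le_neg hi), Real.exp_neg 1]) (by norm_num)]
    have h1 : Real.exp (-ℓ i) ≤ Real.exp (-1) := Real.exp_le_exp.mpr (by linarith)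
    have h2 : Real.exp (-1) ≤ 1/2 := by
      rw [Real.exp_neg, inv_le_comm₀ (Real.exp_pos 1) (by norm_num)]
      have := Real.add_one_le_exp 1
      linarith
    linarith
  have hle : g i ≤ 4 * (ℓ i * Real.exp (-2 * ℓ i)) := hgle i hi
  have hkey : (2 - δ') * (ℓ i * Real.exp (-2 * ℓ i)) ≤ Real.exp (-δ' * ℓ i) := by
    have h1 : (2 - δ') * ℓ i ≤ Real.exp ((2 - δ') * ℓ i) := by
      nlinarith [Real.add_one_le_exp ((2 - δ') * ℓ i)]
    have h2 : Real.exp ((2 - δ') * ℓ i) * Real.exp (-2 * ℓ i) = Real.exp (-δ' * ℓ i) := by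
      rw [← Real.exp_add]; ring_nf
    nlinarith [Real.exp_pos (-2 * ℓ i)]
  have hg2 : 0 ≤ (1 - Real.exp (-ℓ i))⁻¹ := inv_nonneg.mpr (by linarith [hr1 i])
  have h4 : (1 - Real.exp (-ℓ i))⁻¹ * (1 - Real.exp (-ℓ i))⁻¹ ≤ 4 := by nlinarith
  have hstep : g i * ((1 - Real.exp (-ℓ i))⁻¹ * (1 - Real.exp (-ℓ i))⁻¹)
      ≤ (4 * (ℓ i * Real.exp (-2 * ℓ i))) * 4 :=
    mul_le_mul hle h4 (mul_nonneg hg2 hg2)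
      (by positivity)
  refine hstep.trans ?_
  have hpos : (0:ℝ) < 2 - δ' := by linarith
  have hkey' : ℓ i * Real.exp (-2 * ℓ i) ≤ (2 - δ')⁻¹ * Real.exp (-δ' * ℓ i) := by
    rw [← div_eq_inv_mul]
    exact (le_div_iff₀ hpos).mpr (by linarith [hkey])
  have h16 := mul_le_mul_of_nonneg_left hkey' (by norm_num : (0:ℝ) ≤ 16)
  linarith



/-- The factor `e^{i(k/2)θ} e^{-p(ℓ+iθ)} e^{-q(ℓ-iθ)} e^{-wℓ}`. -/
noncomputable def s16f {I : Type*} (ℓ θ : I → ℝ) (k : ℤ) (x : I × ℕ × ℕ) (w : ℂ) : ℂ :=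
  Complex.exp (Complex.I * ((k : ℂ) / 2) * (θ x.1 : ℂ))
    * Complex.exp (-(x.2.1 : ℂ) * ((ℓ x.1 : ℂ) + Complex.I * (θ x.1 : ℂ)))
    * Complex.exp (-(x.2.2 : ℂ) * ((ℓ x.1 : ℂ) - Complex.I * (θ x.1 : ℂ)))
    * Complex.exp (-w * (ℓ x.1 : ℂ))

lemma s16f_eq_exp {I : Type*} (ℓ θ : I → ℝ) (k : ℤ) (x : I × ℕ × ℕ) (w : ℂ) :
    s16f ℓ θ k x w = Complex.exp (Complex.I * ((k : ℂ) / 2) * (θ x.1 : ℂ)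
      + -((x.2.1 : ℂ) * ((ℓ x.1 : ℂ) + Complex.I * (θ x.1 : ℂ)))
      + -((x.2.2 : ℂ) * ((ℓ x.1 : ℂ) - Complex.I * (θ x.1 : ℂ)))
      + -(w * (ℓ x.1 : ℂ))) := by
  simp [s16f, Complex.exp_add, neg_mul]

lemma s16f_norm {I : Type*} (ℓ θ : I → ℝ) (k : ℤ) (x : I × ℕ × ℕ) (w : ℂ) :
    ‖s16f ℓ θ k x w‖
      = Real.exp (-(x.2.1 : ℝ) * ℓ x.1 + -(x.2.2 : ℝ) * ℓ x.1 + -(w.re * ℓ x.1)) := by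
  rw [s16f_eq_exp, Complex.norm_exp]
  congr 1
  simp [Complex.add_re, Complex.mul_re, Complex.div_re, Complex.normSq]

lemma s16f_norm_le {I : Type*} (ℓ θ : I → ℝ) (hℓ : ∀ i, 0 < ℓ i) (k : ℤ) (x : I × ℕ × ℕ)
    (w : ℂ) (hw : 2 ≤ w.re) :
    ‖s16f ℓ θ k x w‖
      ≤ Real.exp (-2 * ℓ x.1) * Real.exp (-ℓ x.1) ^ x.2.1 * Real.exp (-ℓ x.1) ^ x.2.2 := by
  rw [s16f_norm, ← Real.exp_nat_mul, ← Real.exp_nat_mul, ← Real.exp_add, ← Real.exp_add]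
  apply Real.exp_le_exp.mpr
  have h1 : 2 * ℓ x.1 ≤ w.re * ℓ x.1 := mul_le_mul_of_nonneg_right hw (hℓ x.1).le
  ring_nf
  nlinarith [h1]

lemma s16f_norm_lt_one {I : Type*} (ℓ θ : I → ℝ) (hℓ : ∀ i, 0 < ℓ i) (k : ℤ) (x : I × ℕ × ℕ)
    (w : ℂ) (hw : 2 ≤ w.re) : ‖s16f ℓ θ k x w‖ < 1 := by
  refine lt_of_le_of_lt (s16f_norm_le ℓ θ hℓ k x w hw) ?_
  have h0 : Real.exp (-ℓ x.1) ≤ 1 := Real.exp_le_one_iff.mpr (by linarith [hℓ x.1])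
  have h2 : Real.exp (-2 * ℓ x.1) < 1 := Real.exp_lt_one_iff.mpr (by linarith [hℓ x.1])
  have hp : Real.exp (-ℓ x.1) ^ x.2.1 ≤ 1 := pow_le_one₀ (Real.exp_pos _).le h0
  have hq : Real.exp (-ℓ x.1) ^ x.2.2 ≤ 1 := pow_le_one₀ (Real.exp_pos _).le h0
  have e1 : (0:ℝ) < Real.exp (-2 * ℓ x.1) := Real.exp_pos _
  have e2 : (0:ℝ) ≤ Real.exp (-ℓ x.1) ^ x.2.1 := pow_nonneg (Real.exp_pos _).le _
  have e3 : (0:ℝ) ≤ Real.exp (-ℓ x.1) ^ x.2.2 := pow_nonneg (Real.exp_pos _).le _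
  calc Real.exp (-2 * ℓ x.1) * Real.exp (-ℓ x.1) ^ x.2.1 * Real.exp (-ℓ x.1) ^ x.2.2
      ≤ Real.exp (-2 * ℓ x.1) * 1 * 1 := by
        apply mul_le_mul (mul_le_mul le_rfl hp e2 e1.le) hq e3 (by nlinarith)
    _ < 1 := by nlinarith




noncomputable def s16g {I : Type*} (ℓ θ : I → ℝ) (k : ℤ) (x : I × ℕ × ℕ) (w : ℂ) : ℂ :=
  Complex.log (1 - s16f ℓ θ k x w)

noncomputable def s16g' {I : Type*} (ℓ θ : I → ℝ) (k : ℤ) (x : I × ℕ × ℕ) (w : ℂ) : ℂ :=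
  (ℓ x.1 : ℂ) * s16f ℓ θ k x w / (1 - s16f ℓ θ k x w)

lemma s16_Zs_def {I : Type*} (ℓ θ : I → ℝ) (k : ℤ) (w : ℂ) :
    (∏' x : I × ℕ × ℕ,
      (1 - Complex.exp (Complex.I * ((k : ℂ) / 2) * (θ x.1 : ℂ))
       * Complex.exp (-(x.2.1 : ℂ) * ((ℓ x.1 : ℂ) + Complex.I * (θ x.1 : ℂ)))
       * Complex.exp (-(x.2.2 : ℂ) * ((ℓ x.1 : ℂ) - Complex.I * (θ x.1 : ℂ)))
       * Complex.exp (-w * (ℓ x.1 : ℂ)))) = ∏' x : I × ℕ × ℕ, (1 - s16f ℓ θ k x w) := rfl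

lemma s16_re_pos {I : Type*} {ℓ θ : I → ℝ} {k : ℤ} {x : I × ℕ × ℕ} {w : ℂ}
    (h : ‖s16f ℓ θ k x w‖ < 1) : 0 < (1 - s16f ℓ θ k x w).re := by
  have h1 : (s16f ℓ θ k x w).re ≤ ‖s16f ℓ θ k x w‖ := by
    exact Complex.re_le_norm _
  simp only [Complex.sub_re, Complex.one_re]
  linarith

lemma s16_ne_zero {I : Type*} {ℓ θ : I → ℝ} {k : ℤ} {x : I × ℕ × ℕ} {w : ℂ}
    (h : ‖s16f ℓ θ k x w‖ < 1) : 1 - s16f ℓ θ k x w ≠ 0 := by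
  intro h0
  have := s16_re_pos h
  rw [h0] at this
  simp at this

lemma s16_hasDerivAt {I : Type*} (ℓ θ : I → ℝ) (k : ℤ) (x : I × ℕ × ℕ) (w : ℂ)
    (h : ‖s16f ℓ θ k x w‖ < 1) :
    HasDerivAt (fun z => s16g ℓ θ k x z) (s16g' ℓ θ k x w) w := by
  have hf : HasDerivAt (fun z => s16f ℓ θ k x z)
      (s16f ℓ θ k x w * (-1 * (ℓ x.1 : ℂ))) w := by
    have h1 : HasDerivAt (fun z : ℂ => -z * (ℓ x.1 : ℂ)) (-1 * (ℓ x.1 : ℂ)) w :=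
      (hasDerivAt_id w).neg.mul_const _
    have h2 := h1.cexp
    have h3 := h2.const_mul (Complex.exp (Complex.I * ((k : ℂ) / 2) * (θ x.1 : ℂ))
      * Complex.exp (-(x.2.1 : ℂ) * ((ℓ x.1 : ℂ) + Complex.I * (θ x.1 : ℂ)))
      * Complex.exp (-(x.2.2 : ℂ) * ((ℓ x.1 : ℂ) - Complex.I * (θ x.1 : ℂ))))
    exact h3.congr_deriv (by simp only [s16f]; ring)
  have hsub : HasDerivAt (fun z => 1 - s16f ℓ θ k x z)
      (-(s16f ℓ θ k x w * (-1 * (ℓ x.1 : ℂ)))) w := hf.const_sub 1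
  have hlog := hsub.clog (Or.inl (s16_re_pos h))
  exact hlog.congr_deriv (by simp only [s16g']; ring)

lemma s16g_norm_le {I : Type*} (ℓ θ : I → ℝ) (k : ℤ) (x : I × ℕ × ℕ) (w : ℂ)
    (h : ‖s16f ℓ θ k x w‖ ≤ 1 / 2) :
    ‖s16g ℓ θ k x w‖ ≤ 3 / 2 * ‖s16f ℓ θ k x w‖ := by
  have := Complex.norm_log_one_add_half_le_self (z := -s16f ℓ θ k x w) (by simpa using h)
  simpa [s16g, sub_eq_add_neg] using this



def s16e : ℕ ≃ {m : ℕ // 1 ≤ m} where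
  toFun n := ⟨n + 1, Nat.le_add_left 1 n⟩
  invFun m := (m : ℕ) - 1
  left_inv n := by simp
  right_inv m := by
    ext
    exact Nat.succ_pred_eq_of_pos m.2

lemma s16_geomM {c u : ℂ} (hu : ‖u‖ < 1) :
    Summable (fun m : {m : ℕ // 1 ≤ m} => c * u ^ (m : ℕ)) ∧
      (∑' m : {m : ℕ // 1 ≤ m}, c * u ^ (m : ℕ)) = c * u / (1 - u) := by
  have hs : Summable (fun n : ℕ => c * u ^ ((s16e n : ℕ))) := by
    have : (fun n : ℕ => c * u ^ ((s16e n : ℕ))) = fun n : ℕ => (c * u) * u ^ n := by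
      ext n
      simp [s16e, pow_succ]
      ring
    rw [this]
    exact (summable_geometric_of_norm_lt_one hu).mul_left _
  constructor
  · exact (s16e.summable_iff (f := fun m : {m : ℕ // 1 ≤ m} => c * u ^ (m : ℕ))).mp hs
  · rw [← s16e.tsum_eq]
    have : (fun n : ℕ => c * u ^ ((s16e n : ℕ))) = fun n : ℕ => (c * u) * u ^ n := by
      ext n
      simp [s16e, pow_succ]
      ring
    calc ∑' n : ℕ, c * u ^ ((s16e n : ℕ)) = ∑' n : ℕ, (c * u) * u ^ n := by rw [this]
      _ = (c * u) * (1 - u)⁻¹ := by rw [tsum_mul_left, tsum_geometric_of_norm_lt_one hu]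
      _ = c * u / (1 - u) := by rw [div_eq_mul_inv]

lemma s16_geomM_real {c v : ℝ} (h0 : 0 ≤ v) (h1 : v < 1) :
    Summable (fun m : {m : ℕ // 1 ≤ m} => c * v ^ (m : ℕ)) ∧
      (∑' m : {m : ℕ // 1 ≤ m}, c * v ^ (m : ℕ)) = c * v / (1 - v) := by
  have hs : Summable (fun n : ℕ => c * v ^ ((s16e n : ℕ))) := by
    have : (fun n : ℕ => c * v ^ ((s16e n : ℕ))) = fun n : ℕ => (c * v) * v ^ n := by
      ext n
      simp [s16e, pow_succ]
      ring
    rw [this]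
    exact (summable_geometric_of_lt_one h0 h1).mul_left _
  constructor
  · exact (s16e.summable_iff (f := fun m : {m : ℕ // 1 ≤ m} => c * v ^ (m : ℕ))).mp hs
  · rw [← s16e.tsum_eq]
    have : (fun n : ℕ => c * v ^ ((s16e n : ℕ))) = fun n : ℕ => (c * v) * v ^ n := by
      ext n
      simp [s16e, pow_succ]
      ring
    calc ∑' n : ℕ, c * v ^ ((s16e n : ℕ)) = ∑' n : ℕ, (c * v) * v ^ n := by rw [this]
      _ = (c * v) * (1 - v)⁻¹ := by rw [tsum_mul_left, tsum_geometric_of_lt_one h0 h1]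
      _ = c * v / (1 - v) := by rw [div_eq_mul_inv]

lemma s16_geom2 {K A B : ℂ} (hA : ‖A‖ < 1) (hB : ‖B‖ < 1) :
    Summable (fun pq : ℕ × ℕ => K * A ^ pq.1 * B ^ pq.2) ∧
      ∑' pq : ℕ × ℕ, K * A ^ pq.1 * B ^ pq.2 = K / ((1 - A) * (1 - B)) := by
  have hs : Summable (fun pq : ℕ × ℕ => K * A ^ pq.1 * B ^ pq.2) := by
    apply Summable.of_norm
    have : (fun pq : ℕ × ℕ => ‖K * A ^ pq.1 * B ^ pq.2‖)
        = fun pq : ℕ × ℕ => (‖K‖ * ‖A‖ ^ pq.1) * ‖B‖ ^ pq.2 := by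
      ext pq
      simp [norm_mul, norm_pow]
    rw [this]
    exact Summable.mul_of_nonneg
      ((summable_geometric_of_lt_one (norm_nonneg A) hA).mul_left _)
      (summable_geometric_of_lt_one (norm_nonneg B) hB)
      (fun p => mul_nonneg (norm_nonneg _) (pow_nonneg (norm_nonneg _) _))
      (fun q => pow_nonneg (norm_nonneg _) _)
  refine ⟨hs, ?_⟩
  rw [Summable.tsum_prod' hs hs.prod_factor]
  calc ∑' (p : ℕ) (q : ℕ), K * A ^ p * B ^ q
      = ∑' (p : ℕ), K * A ^ p * (1 - B)⁻¹ := by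
        congr 1; ext p
        rw [tsum_mul_left, tsum_geometric_of_norm_lt_one hB]
    _ = K * (1 - A)⁻¹ * (1 - B)⁻¹ := by
        rw [tsum_mul_right, tsum_mul_left, tsum_geometric_of_norm_lt_one hA]
    _ = K / ((1 - A) * (1 - B)) := by
        rw [div_eq_mul_inv, mul_inv]
        ring



lemma s16f_pow {I : Type*} (ℓ θ : I → ℝ) (k : ℤ) (i : I) (p q m : ℕ) (s : ℂ) :
    (s16f ℓ θ k (i, p, q) s) ^ m
      = Complex.exp (Complex.I * ((k : ℂ) / 2) * (m : ℂ) * (θ i : ℂ))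
        * Complex.exp (-s * (m : ℂ) * (ℓ i : ℂ))
        * Complex.exp (-(m : ℂ) * ((ℓ i : ℂ) + Complex.I * (θ i : ℂ))) ^ p
        * Complex.exp (-(m : ℂ) * ((ℓ i : ℂ) - Complex.I * (θ i : ℂ))) ^ q := by
  simp only [s16f, mul_pow, ← Complex.exp_nat_mul, ← Complex.exp_add]
  congr 1
  push_cast
  ring


def s16tau (I : Type*) : (I × {m : ℕ // 1 ≤ m}) × (ℕ × ℕ) ≃ (I × ℕ × ℕ) × {m : ℕ // 1 ≤ m} where
  toFun y := ((y.1.1, y.2.1, y.2.2), y.1.2)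
  invFun z := ((z.1.1, z.2), (z.1.2.1, z.1.2.2))
  left_inv _ := rfl
  right_inv _ := rfl

lemma s16_exp_norm_add (m : ℕ) (a b : ℝ) :
    ‖Complex.exp (-(m : ℂ) * ((a : ℂ) + Complex.I * (b : ℂ)))‖ = Real.exp (-(m * a)) := by
  rw [Complex.norm_exp]
  congr 1
  simp [Complex.mul_re]

lemma s16_exp_norm_sub (m : ℕ) (a b : ℝ) :
    ‖Complex.exp (-(m : ℂ) * ((a : ℂ) - Complex.I * (b : ℂ)))‖ = Real.exp (-(m * a)) := by
  rw [Complex.norm_exp]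
  congr 1
  simp [Complex.mul_re]
set_option maxHeartbeats 1600000 in
/-- logarithmic derivative of the Selberg zeta function as an absolutely
convergent sum over closed geodesics `γ = γ₀^m`. -/
theorem statement16 {I : Type*} [Countable I] (ℓ θ : I → ℝ)
    (hℓ : ∀ i, 0 < ℓ i) (δ : ℝ) (hδ : δ < 2)
    (hsum : Summable fun i => Real.exp (-δ * ℓ i))
    (k : ℤ) (s : ℂ) (hs : 2 < s.re) :
    (Summable fun x : I × {m : ℕ // 1 ≤ m} =>
      (ℓ x.1 : ℂ) * Complex.exp (Complex.I * ((k : ℂ) / 2) * ((x.2 : ℕ) : ℂ) * (θ x.1 : ℂ))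
        * Complex.exp (-s * ((x.2 : ℕ) : ℂ) * (ℓ x.1 : ℂ)) /
      ((1 - Complex.exp (-((x.2 : ℕ) : ℂ) * ((ℓ x.1 : ℂ) + Complex.I * (θ x.1 : ℂ)))) *
       (1 - Complex.exp (-((x.2 : ℕ) : ℂ) * ((ℓ x.1 : ℂ) - Complex.I * (θ x.1 : ℂ)))))) ∧
    HasDerivAt (fun w : ℂ => Zs ℓ θ k w)
      (Zs ℓ θ k s *
        ∑' x : I × {m : ℕ // 1 ≤ m},
          (ℓ x.1 : ℂ) * Complex.exp (Complex.I * ((k : ℂ) / 2) * ((x.2 : ℕ) : ℂ) * (θ x.1 : ℂ))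
            * Complex.exp (-s * ((x.2 : ℕ) : ℂ) * (ℓ x.1 : ℂ)) /
          ((1 - Complex.exp (-((x.2 : ℕ) : ℂ) * ((ℓ x.1 : ℂ) + Complex.I * (θ x.1 : ℂ)))) *
           (1 - Complex.exp (-((x.2 : ℕ) : ℂ) * ((ℓ x.1 : ℂ) - Complex.I * (θ x.1 : ℂ)))))) s := by
  have hs2 : (2:ℝ) ≤ s.re := le_of_lt hs
  have hUopen : IsOpen {w : ℂ | 2 < w.re} := isOpen_lt continuous_const Complex.continuous_re
  have hUconn : IsPreconnected {w : ℂ | 2 < w.re} :=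
    (convex_halfSpace_re_gt (2:ℝ)).isPreconnected
  have hsU : s ∈ {w : ℂ | 2 < w.re} := hs
  have hlt1 : ∀ (x : I × ℕ × ℕ) (w : ℂ), 2 ≤ w.re → ‖s16f ℓ θ k x w‖ < 1 :=
    fun x w hw => s16f_norm_lt_one ℓ θ hℓ k x w hw
  have hr01 : ∀ i, 0 ≤ Real.exp (-ℓ i) := fun i => (Real.exp_pos _).le
  have hrle1 : ∀ i, Real.exp (-ℓ i) ≤ 1 :=
    fun i => Real.exp_le_one_iff.mpr (by linarith [hℓ i])
  have h2lt1 : ∀ i, Real.exp (-2 * ℓ i) < 1 :=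
    fun i => Real.exp_lt_one_iff.mpr (by nlinarith [hℓ i])
  have h2pos : ∀ i, 0 < 1 - Real.exp (-2 * ℓ i) := fun i => by linarith [h2lt1 i]
  have hBle : ∀ x : I × ℕ × ℕ,
      Real.exp (-2 * ℓ x.1) * Real.exp (-ℓ x.1) ^ x.2.1 * Real.exp (-ℓ x.1) ^ x.2.2
        ≤ Real.exp (-2 * ℓ x.1) := by
    intro x
    have hp : Real.exp (-ℓ x.1) ^ x.2.1 ≤ 1 := pow_le_one₀ (hr01 _) (hrle1 _)
    have hq : Real.exp (-ℓ x.1) ^ x.2.2 ≤ 1 := pow_le_one₀ (hr01 _) (hrle1 _)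
    have e1 : (0:ℝ) < Real.exp (-2 * ℓ x.1) := Real.exp_pos _
    have h1 : Real.exp (-2 * ℓ x.1) * Real.exp (-ℓ x.1) ^ x.2.1 ≤ Real.exp (-2 * ℓ x.1) := by
      calc Real.exp (-2 * ℓ x.1) * Real.exp (-ℓ x.1) ^ x.2.1
          ≤ Real.exp (-2 * ℓ x.1) * 1 := mul_le_mul_of_nonneg_left hp e1.le
        _ = Real.exp (-2 * ℓ x.1) := mul_one _
    calc Real.exp (-2 * ℓ x.1) * Real.exp (-ℓ x.1) ^ x.2.1 * Real.exp (-ℓ x.1) ^ x.2.2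
        ≤ Real.exp (-2 * ℓ x.1) * 1 :=
          mul_le_mul h1 hq (pow_nonneg (hr01 _) _) e1.le
      _ = Real.exp (-2 * ℓ x.1) := mul_one _
  -- two master summable majorants
  have hub : Summable (fun x : I × ℕ × ℕ =>
      (ℓ x.1 * Real.exp (-2 * ℓ x.1) * (1 - Real.exp (-2 * ℓ x.1))⁻¹)
        * Real.exp (-ℓ x.1) ^ x.2.1 * Real.exp (-ℓ x.1) ^ x.2.2) := by
    refine s16_sumX ℓ hℓ δ hδ hsum
      (fun i => ℓ i * Real.exp (-2 * ℓ i) * (1 - Real.exp (-2 * ℓ i))⁻¹)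
      (fun i => ?_) (fun i hi => ?_)
    · exact mul_nonneg (mul_nonneg (hℓ i).le (Real.exp_pos _).le)
        (inv_nonneg.mpr (h2pos i).le)
    · have hinv : (1 - Real.exp (-2 * ℓ i))⁻¹ ≤ 2 := by
        rw [inv_le_comm₀ (h2pos i) (by norm_num)]
        have h1 : Real.exp (-2 * ℓ i) ≤ Real.exp (-2) :=
          Real.exp_le_exp.mpr (by nlinarith)
        have h2 : Real.exp (-2) ≤ 1/2 := by
          rw [Real.exp_neg, inv_le_comm₀ (Real.exp_pos 2) (by norm_num)]
          have := Real.add_one_le_exp 2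
          linarith
        linarith
      have h0 : 0 ≤ ℓ i * Real.exp (-2 * ℓ i) := by positivity
      calc ℓ i * Real.exp (-2 * ℓ i) * (1 - Real.exp (-2 * ℓ i))⁻¹
          ≤ ℓ i * Real.exp (-2 * ℓ i) * 2 := by
            exact mul_le_mul_of_nonneg_left hinv h0
        _ ≤ 4 * (ℓ i * Real.exp (-2 * ℓ i)) := by nlinarith
  have hB : Summable (fun x : I × ℕ × ℕ =>
      Real.exp (-2 * ℓ x.1) * Real.exp (-ℓ x.1) ^ x.2.1 * Real.exp (-ℓ x.1) ^ x.2.2) := by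
    refine s16_sumX ℓ hℓ δ hδ hsum (fun i => Real.exp (-2 * ℓ i))
      (fun i => (Real.exp_pos _).le) (fun i hi => ?_)
    nlinarith [Real.exp_pos (-2 * ℓ i)]
  -- the division bound, used twice
  have hdivle : ∀ (x : I × ℕ × ℕ) (v : ℝ), 0 ≤ v →
      v ≤ Real.exp (-2 * ℓ x.1) * Real.exp (-ℓ x.1) ^ x.2.1 * Real.exp (-ℓ x.1) ^ x.2.2 →
      ℓ x.1 * v / (1 - v) ≤
        (ℓ x.1 * Real.exp (-2 * ℓ x.1) * (1 - Real.exp (-2 * ℓ x.1))⁻¹)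
          * Real.exp (-ℓ x.1) ^ x.2.1 * Real.exp (-ℓ x.1) ^ x.2.2 := by
    intro x v hv0 hvB
    have hvle : v ≤ Real.exp (-2 * ℓ x.1) := le_trans hvB (hBle x)
    have hd : 0 < 1 - v := by linarith [h2lt1 x.1]
    have hdd : 1 - Real.exp (-2 * ℓ x.1) ≤ 1 - v := by linarith
    calc ℓ x.1 * v / (1 - v)
        ≤ ℓ x.1 * (Real.exp (-2 * ℓ x.1) * Real.exp (-ℓ x.1) ^ x.2.1
            * Real.exp (-ℓ x.1) ^ x.2.2) / (1 - Real.exp (-2 * ℓ x.1)) := by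
          apply div_le_div₀ (mul_nonneg (hℓ x.1).le (by positivity)) ?_ (h2pos x.1) hdd
          nlinarith [(hℓ x.1).le, hvB]
      _ = (ℓ x.1 * Real.exp (-2 * ℓ x.1) * (1 - Real.exp (-2 * ℓ x.1))⁻¹)
            * Real.exp (-ℓ x.1) ^ x.2.1 * Real.exp (-ℓ x.1) ^ x.2.2 := by
          rw [div_eq_mul_inv]
          ring
  -- norm bound on the derivative terms
  have hg'le : ∀ (x : I × ℕ × ℕ) (w : ℂ), w ∈ {w : ℂ | 2 < w.re} →
      ‖s16g' ℓ θ k x w‖ ≤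
        (ℓ x.1 * Real.exp (-2 * ℓ x.1) * (1 - Real.exp (-2 * ℓ x.1))⁻¹)
          * Real.exp (-ℓ x.1) ^ x.2.1 * Real.exp (-ℓ x.1) ^ x.2.2 := by
    intro x w hw
    have hw2 : (2:ℝ) ≤ w.re := le_of_lt hw
    have hfB := s16f_norm_le ℓ θ hℓ k x w hw2
    have hd : 1 - Real.exp (-2 * ℓ x.1) ≤ ‖1 - s16f ℓ θ k x w‖ := by
      have h1 : ‖(1:ℂ)‖ - ‖s16f ℓ θ k x w‖ ≤ ‖1 - s16f ℓ θ k x w‖ := norm_sub_norm_le _ _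
      rw [norm_one] at h1
      linarith [le_trans hfB (hBle x)]
    have hnorm : ‖s16g' ℓ θ k x w‖
        = ℓ x.1 * ‖s16f ℓ θ k x w‖ / ‖1 - s16f ℓ θ k x w‖ := by
      simp only [s16g']
      rw [norm_div, norm_mul, Complex.norm_real, Real.norm_eq_abs, abs_of_pos (hℓ _)]
    rw [hnorm]
    calc ℓ x.1 * ‖s16f ℓ θ k x w‖ / ‖1 - s16f ℓ θ k x w‖
        ≤ ℓ x.1 * ‖s16f ℓ θ k x w‖ / (1 - ‖s16f ℓ θ k x w‖) := by
          apply div_le_div₀ (mul_nonneg (hℓ x.1).le (norm_nonneg _)) le_rfl ?_ ?_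
          · have := le_trans hfB (hBle x); linarith [h2lt1 x.1]
          · have h1 : ‖(1:ℂ)‖ - ‖s16f ℓ θ k x w‖ ≤ ‖1 - s16f ℓ θ k x w‖ := norm_sub_norm_le _ _
            rw [norm_one] at h1; linarith
      _ ≤ _ := hdivle x ‖s16f ℓ θ k x w‖ (norm_nonneg _) hfB
  -- summability of the logarithms for `2 ≤ re w`
  have hlogsum : ∀ w : ℂ, 2 ≤ w.re → Summable (fun x : I × ℕ × ℕ => s16g ℓ θ k x w) := by
    intro w hw
    apply Summable.of_norm_bounded_eventually
      (g := fun x : I × ℕ × ℕ => 3/2 * (Real.exp (-2 * ℓ x.1) * Real.exp (-ℓ x.1) ^ x.2.1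
        * Real.exp (-ℓ x.1) ^ x.2.2)) (hB.mul_left _)
    have hev : ∀ᶠ x : I × ℕ × ℕ in Filter.cofinite,
        Real.exp (-2 * ℓ x.1) * Real.exp (-ℓ x.1) ^ x.2.1 * Real.exp (-ℓ x.1) ^ x.2.2 < 1/2 :=
      hB.tendsto_cofinite_zero.eventually_lt_const (by norm_num)
    filter_upwards [hev] with x hx
    have h1 : ‖s16f ℓ θ k x w‖ ≤ Real.exp (-2 * ℓ x.1) * Real.exp (-ℓ x.1) ^ x.2.1
        * Real.exp (-ℓ x.1) ^ x.2.2 := s16f_norm_le ℓ θ hℓ k x w hw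
    have h2 := s16g_norm_le ℓ θ k x w (by linarith)
    calc ‖s16g ℓ θ k x w‖ ≤ 3/2 * ‖s16f ℓ θ k x w‖ := h2
      _ ≤ _ := by linarith
  -- termwise differentiation of the sum of logarithms
  have hDtsum : HasDerivAt (fun w : ℂ => ∑' x : I × ℕ × ℕ, s16g ℓ θ k x w)
      (∑' x : I × ℕ × ℕ, s16g' ℓ θ k x s) s :=
    hasDerivAt_tsum_of_isPreconnected hub hUopen hUconn
      (fun x w hw => s16_hasDerivAt ℓ θ k x w (hlt1 x w (le_of_lt hw)))
      hg'le hsU (hlogsum s hs2) hsU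
  -- the zeta function is the exponential of the sum of logarithms
  have hZeq : ∀ w : ℂ, 2 ≤ w.re →
      Zs ℓ θ k w = Complex.exp (∑' x : I × ℕ × ℕ, s16g ℓ θ k x w) := by
    intro w hw
    have hne : ∀ x : I × ℕ × ℕ, 1 - s16f ℓ θ k x w ≠ 0 :=
      fun x => s16_ne_zero (hlt1 x w hw)
    have hprod : HasProd (fun x : I × ℕ × ℕ => 1 - s16f ℓ θ k x w)
        (Complex.exp (∑' x : I × ℕ × ℕ, s16g ℓ θ k x w)) := by
      have h1 := (hlogsum w hw).hasSum.cexp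
      have h2 : (Complex.exp ∘ fun x : I × ℕ × ℕ => s16g ℓ θ k x w)
          = fun x => 1 - s16f ℓ θ k x w := funext fun x => Complex.exp_log (hne x)
      rwa [h2] at h1
    have hzd : Zs ℓ θ k w = ∏' x : I × ℕ × ℕ, (1 - s16f ℓ θ k x w) := rfl
    rw [hzd]
    exact hprod.tprod_eq
    -- resummation over closed geodesics
  have hlt1s : ∀ x : I × ℕ × ℕ, ‖s16f ℓ θ k x s‖ < 1 := fun x => hlt1 x s hs2
  have hF4 : Summable (fun y : (I × ℕ × ℕ) × {m : ℕ // 1 ≤ m} =>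
      (ℓ y.1.1 : ℂ) * s16f ℓ θ k y.1 s ^ (y.2 : ℕ)) := by
    apply Summable.of_norm
    have hnf : (fun y : (I × ℕ × ℕ) × {m : ℕ // 1 ≤ m} =>
        ‖(ℓ y.1.1 : ℂ) * s16f ℓ θ k y.1 s ^ (y.2 : ℕ)‖)
        = fun y => ℓ y.1.1 * ‖s16f ℓ θ k y.1 s‖ ^ (y.2 : ℕ) := by
      funext y
      rw [norm_mul, norm_pow, Complex.norm_real, Real.norm_eq_abs, abs_of_pos (hℓ _)]
    rw [hnf]
    refine (summable_prod_of_nonneg ?_).mpr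
      ⟨fun x => (s16_geomM_real (c := ℓ x.1) (norm_nonneg _) (hlt1s x)).1, ?_⟩
    · intro y
      exact mul_nonneg (hℓ _).le (pow_nonneg (norm_nonneg _) _)
    refine Summable.of_nonneg_of_le
      (fun x => tsum_nonneg fun m => mul_nonneg (hℓ _).le (pow_nonneg (norm_nonneg _) _))
      (fun x => ?_) hub
    rw [show (∑' m : {m : ℕ // 1 ≤ m}, ℓ (x, m).1.1 * ‖s16f ℓ θ k (x, m).1 s‖ ^ ((x, m).2 : ℕ))
        = ∑' m : {m : ℕ // 1 ≤ m}, ℓ x.1 * ‖s16f ℓ θ k x s‖ ^ (m : ℕ) from rfl,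
      (s16_geomM_real (c := ℓ x.1) (norm_nonneg _) (hlt1s x)).2]
    exact hdivle x ‖s16f ℓ θ k x s‖ (norm_nonneg _) (s16f_norm_le ℓ θ hℓ k x s hs2)
  have hF4t : Summable ((fun y : (I × ℕ × ℕ) × {m : ℕ // 1 ≤ m} =>
      (ℓ y.1.1 : ℂ) * s16f ℓ θ k y.1 s ^ (y.2 : ℕ)) ∘ (s16tau I)) :=
    ((s16tau I).summable_iff).mpr hF4
  have hfib2 : ∀ z : I × {m : ℕ // 1 ≤ m},
      HasSum (fun pq : ℕ × ℕ => (ℓ z.1 : ℂ) * s16f ℓ θ k (z.1, pq.1, pq.2) s ^ ((z.2 : ℕ)))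
        ((ℓ z.1 : ℂ)
          * Complex.exp (Complex.I * ((k : ℂ) / 2) * ((z.2 : ℕ) : ℂ) * (θ z.1 : ℂ))
          * Complex.exp (-s * ((z.2 : ℕ) : ℂ) * (ℓ z.1 : ℂ)) /
          ((1 - Complex.exp (-((z.2 : ℕ) : ℂ) * ((ℓ z.1 : ℂ) + Complex.I * (θ z.1 : ℂ)))) *
           (1 - Complex.exp (-((z.2 : ℕ) : ℂ) * ((ℓ z.1 : ℂ) - Complex.I * (θ z.1 : ℂ)))))) := by
    rintro ⟨i, m⟩
    have hm : (0:ℝ) < ((m : ℕ) : ℝ) := by exact_mod_cast m.2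
    have hA : ‖Complex.exp (-((m : ℕ) : ℂ) * ((ℓ i : ℂ) + Complex.I * (θ i : ℂ)))‖ < 1 := by
      rw [s16_exp_norm_add]
      exact Real.exp_lt_one_iff.mpr (by nlinarith [hℓ i])
    have hB' : ‖Complex.exp (-((m : ℕ) : ℂ) * ((ℓ i : ℂ) - Complex.I * (θ i : ℂ)))‖ < 1 := by
      rw [s16_exp_norm_sub]
      exact Real.exp_lt_one_iff.mpr (by nlinarith [hℓ i])
    have hgeo := s16_geom2 (K := (ℓ i : ℂ)
        * Complex.exp (Complex.I * ((k : ℂ) / 2) * ((m : ℕ) : ℂ) * (θ i : ℂ))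
        * Complex.exp (-s * ((m : ℕ) : ℂ) * (ℓ i : ℂ))) hA hB'
    have hfun : (fun pq : ℕ × ℕ => (ℓ i : ℂ) * s16f ℓ θ k (i, pq.1, pq.2) s ^ ((m : ℕ)))
        = fun pq : ℕ × ℕ => ((ℓ i : ℂ)
            * Complex.exp (Complex.I * ((k : ℂ) / 2) * ((m : ℕ) : ℂ) * (θ i : ℂ))
            * Complex.exp (-s * ((m : ℕ) : ℂ) * (ℓ i : ℂ)))
          * Complex.exp (-((m : ℕ) : ℂ) * ((ℓ i : ℂ) + Complex.I * (θ i : ℂ))) ^ pq.1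
          * Complex.exp (-((m : ℕ) : ℂ) * ((ℓ i : ℂ) - Complex.I * (θ i : ℂ))) ^ pq.2 := by
      funext pq
      rw [s16f_pow]
      ring
    rw [hfun]
    have h1 := hgeo.1.hasSum
    rwa [hgeo.2] at h1
  have htgtHasSum : HasSum (fun z : I × {m : ℕ // 1 ≤ m} =>
      (ℓ z.1 : ℂ) * Complex.exp (Complex.I * ((k : ℂ) / 2) * ((z.2 : ℕ) : ℂ) * (θ z.1 : ℂ))
        * Complex.exp (-s * ((z.2 : ℕ) : ℂ) * (ℓ z.1 : ℂ)) /
      ((1 - Complex.exp (-((z.2 : ℕ) : ℂ) * ((ℓ z.1 : ℂ) + Complex.I * (θ z.1 : ℂ)))) *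
       (1 - Complex.exp (-((z.2 : ℕ) : ℂ) * ((ℓ z.1 : ℂ) - Complex.I * (θ z.1 : ℂ))))))
      (∑' y : (I × {m : ℕ // 1 ≤ m}) × (ℕ × ℕ),
        ((fun y : (I × ℕ × ℕ) × {m : ℕ // 1 ≤ m} =>
          (ℓ y.1.1 : ℂ) * s16f ℓ θ k y.1 s ^ (y.2 : ℕ)) ∘ (s16tau I)) y) :=
    HasSum.prod_fiberwise hF4t.hasSum (fun z => hfib2 z)
  have hsum_eq : (∑' x : I × ℕ × ℕ, s16g' ℓ θ k x s)
      = ∑' z : I × {m : ℕ // 1 ≤ m},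
        (ℓ z.1 : ℂ) * Complex.exp (Complex.I * ((k : ℂ) / 2) * ((z.2 : ℕ) : ℂ) * (θ z.1 : ℂ))
          * Complex.exp (-s * ((z.2 : ℕ) : ℂ) * (ℓ z.1 : ℂ)) /
        ((1 - Complex.exp (-((z.2 : ℕ) : ℂ) * ((ℓ z.1 : ℂ) + Complex.I * (θ z.1 : ℂ)))) *
         (1 - Complex.exp (-((z.2 : ℕ) : ℂ) * ((ℓ z.1 : ℂ) - Complex.I * (θ z.1 : ℂ))))) := by
    have h1 : (∑' x : I × ℕ × ℕ, s16g' ℓ θ k x s)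
        = ∑' (x : I × ℕ × ℕ) (m : {m : ℕ // 1 ≤ m}),
            (ℓ x.1 : ℂ) * s16f ℓ θ k x s ^ (m : ℕ) := by
      refine tsum_congr fun x => ?_
      have h2 := (s16_geomM (c := (ℓ x.1 : ℂ)) (hlt1s x)).2
      simp only [s16g']
      exact h2.symm
    rw [h1, ← Summable.tsum_prod' hF4 hF4.prod_factor,
      ← (s16tau I).tsum_eq (fun y : (I × ℕ × ℕ) × {m : ℕ // 1 ≤ m} =>
        (ℓ y.1.1 : ℂ) * s16f ℓ θ k y.1 s ^ (y.2 : ℕ))]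
    exact htgtHasSum.tsum_eq.symm
  refine ⟨htgtHasSum.summable, ?_⟩
  have hDexp := hDtsum.cexp
  have hev : (fun w : ℂ => Zs ℓ θ k w) =ᶠ[nhds s]
      fun w : ℂ => Complex.exp (∑' x : I × ℕ × ℕ, s16g ℓ θ k x w) := by
    filter_upwards [hUopen.mem_nhds hsU] with w hw
    exact hZeq w (le_of_lt hw)
  have hD := hDexp.congr_of_eventuallyEq hev
  rw [hZeq s hs2, ← hsum_eq]
  exact hD
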